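/- The intersection of permutohedra equals the permutohedron of the minimal vector: with v^{(−)} defined by partial sums Σ_{i≤k} v_i^{(−)} = min_j Σ_{i≤k} v_i^{(j)} (assumed decreasingly ordered), one has P_{v^{(−)}} = ∩_{j=1}^R P_{v^{(j)}}. -/

import Mathlib

/-- The vector `v` with entries sorted in decreasing order. -/
noncomputable def sortDesc {d : ℕ} (v : Fin d → ℝ) : Fin d → ℝ :=
  fun i => v (Tuple.sort (fun j => -v j) i)

/-- Sum of the `k` largest entries of `v`. -/
noncomputable def psum {d : ℕ} (v : Fin d → ℝ) (k : ℕ) : ℝ :=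
  ∑ i ∈ Finset.univ.filter (fun i : Fin d => (i : ℕ) < k), sortDesc v i

/-- `v ≺ w` : `v` is majorized by `w`. -/
def Majorizes {d : ℕ} (v w : Fin d → ℝ) : Prop :=
  (∀ k : ℕ, k ≤ d → psum v k ≤ psum w k) ∧ ∑ i, v i = ∑ i, w i

/-- Sum of the first `k` entries of `v` (no sorting). -/
noncomputable def rawPsum {d : ℕ} (v : Fin d → ℝ) (k : ℕ) : ℝ :=
  ∑ i ∈ Finset.univ.filter (fun i : Fin d => (i : ℕ) < k), v i

/-- The permutohedron of `w`: the convex hull of all coordinate permutations of `w`. -/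
noncomputable def permutohedron {d : ℕ} (w : Fin d → ℝ) : Set (Fin d → ℝ) :=
  convexHull ℝ {x | ∃ σ : Equiv.Perm (Fin d), x = w ∘ σ}

lemma sortDesc_antitone {d : ℕ} (v : Fin d → ℝ) : Antitone (sortDesc v) := by
  have h := Tuple.monotone_sort (fun j => -v j)
  intro i j hij
  have := h hij
  simp only [Function.comp_apply] at this
  simpa [sortDesc] using this

lemma sortDesc_eq_self {d : ℕ} {v : Fin d → ℝ} (hv : Antitone v) : sortDesc v = v := by
  have h1 : Monotone ((fun j => -v j) ∘ Tuple.sort (fun j => -v j)) :=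
    Tuple.monotone_sort _
  have h2 : Monotone ((fun j => -v j) ∘ (Equiv.refl (Fin d)).toFun) := by
    intro i j hij
    simpa using hv hij
  have := Tuple.unique_monotone (f := fun j => -v j)
    (σ := Equiv.refl (Fin d)) (τ := Tuple.sort (fun j => -v j)) h2 h1
  funext i
  have := congrFun this i
  simp only [Function.comp_apply, Equiv.refl_apply, Equiv.toFun_as_coe] at this
  have : v i = v (Tuple.sort (fun j => -v j) i) := by linarith
  simpa [sortDesc] using this.symm

lemma card_filter_lt {d k : ℕ} (hk : k ≤ d) :
    (Finset.univ.filter (fun i : Fin d => (i : ℕ) < k)).card = k := by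
  have : (Finset.univ.filter (fun i : Fin d => (i : ℕ) < k)).image Fin.val
      = Finset.range k := by
    ext m
    simp only [Finset.mem_image, Finset.mem_filter, Finset.mem_univ, true_and,
      Finset.mem_range]
    constructor
    · rintro ⟨i, hi, rfl⟩; exact hi
    · intro hm; exact ⟨⟨m, lt_of_lt_of_le hm hk⟩, hm, rfl⟩
  calc (Finset.univ.filter (fun i : Fin d => (i : ℕ) < k)).card
      = ((Finset.univ.filter (fun i : Fin d => (i : ℕ) < k)).image Fin.val).card :=
        (Finset.card_image_of_injective _ Fin.val_injective).symm
    _ = k := by rw [this, Finset.card_range]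

lemma psum_exists_set {d k : ℕ} (hk : k ≤ d) (v : Fin d → ℝ) :
    ∃ S : Finset (Fin d), S.card = k ∧ psum v k = ∑ i ∈ S, v i := by
  set σ := Tuple.sort (fun j => -v j)
  refine ⟨(Finset.univ.filter (fun i : Fin d => (i : ℕ) < k)).image σ, ?_, ?_⟩
  · rw [Finset.card_image_of_injective _ σ.injective]; exact card_filter_lt hk
  · rw [Finset.sum_image (fun a _ b _ h => σ.injective h)]
    rfl

lemma sum_le_psum {d k : ℕ} (v : Fin d → ℝ) (S : Finset (Fin d)) (hS : S.card = k) :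
    ∑ i ∈ S, v i ≤ psum v k := by
  have hk : k ≤ d := by
    rw [← hS]
    simpa using Finset.card_le_card (Finset.subset_univ S)
  set σ := Tuple.sort (fun j => -v j) with hσ
  set T := Finset.univ.filter (fun i : Fin d => (i : ℕ) < k) with hT
  set S₀ := T.image σ with hS₀
  have hTcard : T.card = k := card_filter_lt hk
  have hS₀card : S₀.card = k := by
    rw [hS₀, Finset.card_image_of_injective _ σ.injective]; exact hTcard
  have hpsum : psum v k = ∑ i ∈ S₀, v i := by
    rw [hS₀, Finset.sum_image (fun a _ b _ h => σ.injective h)]; rfl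
  rw [hpsum]
  -- pairwise: i ∉ S₀, j ∈ S₀ → v i ≤ v j
  have key : ∀ i ∉ S₀, ∀ j ∈ S₀, v i ≤ v j := by
    intro i hi j hj
    rw [hS₀, Finset.mem_image] at hj
    obtain ⟨t, ht, rfl⟩ := hj
    have hti : (t : ℕ) < k := by simpa [hT] using ht
    have hik : ¬ ((σ.symm i : ℕ) < k) := by
      intro hcon
      apply hi
      rw [hS₀, Finset.mem_image]
      exact ⟨σ.symm i, by simpa [hT] using hcon, by simp⟩
    have hle : t ≤ σ.symm i := by
      rw [Fin.le_def]; omega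
    have := sortDesc_antitone v hle
    simp only [sortDesc, ← hσ] at this
    simpa using this
  -- split sums
  have hsplit1 : ∑ i ∈ S ∩ S₀, v i + ∑ i ∈ S \ S₀, v i = ∑ i ∈ S, v i :=
    Finset.sum_inter_add_sum_sdiff S S₀ v
  have hsplit2 : ∑ i ∈ S₀ ∩ S, v i + ∑ i ∈ S₀ \ S, v i = ∑ i ∈ S₀, v i :=
    Finset.sum_inter_add_sum_sdiff S₀ S v
  have hcards : (S \ S₀).card = (S₀ \ S).card :=
    Finset.card_sdiff_comm (by rw [hS, hS₀card])
  have hmain : ∑ i ∈ S \ S₀, v i ≤ ∑ i ∈ S₀ \ S, v i := by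
    rcases Finset.eq_empty_or_nonempty (S₀ \ S) with he | hne
    · have : (S \ S₀) = ∅ := Finset.card_eq_zero.mp (by rw [hcards, he]; simp)
      simp [this, he]
    · set c := (S₀ \ S).inf' hne v with hc
      calc ∑ i ∈ S \ S₀, v i ≤ (S \ S₀).card • c := by
            apply Finset.sum_le_card_nsmul
            intro i hi
            rw [hc, Finset.le_inf'_iff]
            intro j hj
            exact key i (Finset.mem_sdiff.mp hi).2 j (Finset.mem_sdiff.mp hj).1
        _ = (S₀ \ S).card • c := by rw [hcards]
        _ ≤ ∑ i ∈ S₀ \ S, v i := by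
            apply Finset.card_nsmul_le_sum
            intro j hj
            exact Finset.inf'_le _ hj
  calc ∑ i ∈ S, v i = ∑ i ∈ S ∩ S₀, v i + ∑ i ∈ S \ S₀, v i := hsplit1.symm
    _ ≤ ∑ i ∈ S₀ ∩ S, v i + ∑ i ∈ S₀ \ S, v i := by
        rw [Finset.inter_comm]; linarith [hmain]
    _ = ∑ i ∈ S₀, v i := hsplit2

lemma psum_zero {d : ℕ} (v : Fin d → ℝ) : psum v 0 = 0 := by
  simp [psum]

lemma psum_top {d : ℕ} (v : Fin d → ℝ) : psum v d = ∑ i, v i := by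
  have : (Finset.univ.filter (fun i : Fin d => (i : ℕ) < d)) = Finset.univ := by
    ext i; simp [i.isLt]
  rw [psum, this]
  exact Equiv.sum_comp (Tuple.sort (fun j => -v j)) v

lemma psum_succ {d k : ℕ} (hk : k < d) (v : Fin d → ℝ) :
    psum v (k + 1) = psum v k + sortDesc v ⟨k, hk⟩ := by
  have : (Finset.univ.filter (fun i : Fin d => (i : ℕ) < k + 1))
      = insert (⟨k, hk⟩ : Fin d) (Finset.univ.filter (fun i : Fin d => (i : ℕ) < k)) := by
    ext i
    simp only [Finset.mem_filter, Finset.mem_univ, true_and, Finset.mem_insert]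
    simp only [Fin.ext_iff, Fin.val_mk]
    omega
  rw [psum, this, Finset.sum_insert (by simp), psum]
  ring

lemma majorizes_iff {d : ℕ} (x w : Fin d → ℝ) :
    Majorizes x w ↔
      (∀ S : Finset (Fin d), ∑ i ∈ S, x i ≤ psum w S.card) ∧ ∑ i, x i = ∑ i, w i := by
  constructor
  · rintro ⟨h1, h2⟩
    refine ⟨fun S => ?_, h2⟩
    have hk : S.card ≤ d := by simpa using Finset.card_le_card (Finset.subset_univ S)
    exact (sum_le_psum x S rfl).trans (h1 _ hk)
  · rintro ⟨h1, h2⟩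
    refine ⟨fun k hk => ?_, h2⟩
    obtain ⟨S, hScard, hSsum⟩ := psum_exists_set hk x
    rw [hSsum, ← hScard]
    exact h1 S

lemma rado_subset {d : ℕ} (w : Fin d → ℝ) :
    permutohedron w ⊆ {x | Majorizes x w} := by
  apply convexHull_min
  · rintro x ⟨σ, rfl⟩
    rw [Set.mem_setOf_eq, majorizes_iff]
    constructor
    · intro S
      have : ∑ i ∈ S, (w ∘ σ) i = ∑ i ∈ S.image σ, w i := by
        rw [Finset.sum_image (fun a _ b _ h => σ.injective h)]; rfl
      rw [this, ← Finset.card_image_of_injective S σ.injective]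
      exact sum_le_psum w _ rfl
    · exact Equiv.sum_comp σ w
  · intro x hx y hy a b ha hb hab
    rw [Set.mem_setOf_eq, majorizes_iff] at *
    obtain ⟨hx1, hx2⟩ := hx
    obtain ⟨hy1, hy2⟩ := hy
    constructor
    · intro S
      have : ∑ i ∈ S, (a • x + b • y) i = a * ∑ i ∈ S, x i + b * ∑ i ∈ S, y i := by
        simp [Finset.sum_add_distrib, Finset.mul_sum]
      rw [this]
      calc a * ∑ i ∈ S, x i + b * ∑ i ∈ S, y i
          ≤ a * psum w S.card + b * psum w S.card := by
            gcongr <;> [exact hx1 S; exact hy1 S]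
        _ = psum w S.card := by rw [← add_mul, hab, one_mul]
    · have : ∑ i, (a • x + b • y) i = a * ∑ i, x i + b * ∑ i, y i := by
        simp [Finset.sum_add_distrib, Finset.mul_sum]
      rw [this, hx2, hy2, ← add_mul, hab, one_mul]

lemma abel_aux (A s : ℕ → ℝ) (d : ℕ) (hA : ∀ m n, m ≤ n → n < d → A n ≤ A m)
    (hs : ∀ k, k ≤ d → s k ≤ 0) (h0 : s 0 = 0) (hd : s d = 0) :
    ∑ k ∈ Finset.range d, A k * (s (k+1) - s k) ≤ 0 := by
  rcases Nat.eq_zero_or_pos d with rfl | hdpos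
  · simp
  set B : ℕ → ℝ := fun k => A (min k (d-1)) with hB
  have hBA : ∀ k, k < d → B k = A k := fun k hk => by
    have : min k (d-1) = k := by omega
    simp [hB, this]
  have hBanti : ∀ m n, m ≤ n → B n ≤ B m := fun m n h =>
    hA _ _ (by omega) (by omega)
  have claim : ∀ n, n ≤ d → ∑ k ∈ Finset.range n, A k * (s (k+1) - s k) ≤ B n * s n := by
    intro n
    induction n with
    | zero => intro _; simp [h0]
    | succ n ih =>
      intro hn
      rw [Finset.sum_range_succ]
      have h1 := ih (by omega)
      have hAB : A n = B n := (hBA n (by omega)).symm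
      have hstep : B n * s n + A n * (s (n+1) - s n) = B n * s (n+1) := by
        rw [hAB]; ring
      have hlast : B n * s (n+1) ≤ B (n+1) * s (n+1) := by
        have hb := hBanti n (n+1) (by omega)
        have hsn := hs (n+1) hn
        nlinarith
      linarith
  calc ∑ k ∈ Finset.range d, A k * (s (k+1) - s k) ≤ B d * s d := claim d le_rfl
    _ = 0 := by rw [hd]; ring

lemma rado_superset {d : ℕ} (w x : Fin d → ℝ) (hx : Majorizes x w) :
    x ∈ permutohedron w := by
  by_contra hxn
  have hfin : Set.Finite {y : Fin d → ℝ | ∃ σ : Equiv.Perm (Fin d), y = w ∘ σ} := by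
    have : {y : Fin d → ℝ | ∃ σ : Equiv.Perm (Fin d), y = w ∘ σ}
        = Set.range (fun σ : Equiv.Perm (Fin d) => w ∘ σ) := by
      ext y; simp [Set.mem_setOf_eq, Set.mem_range, eq_comm]
    rw [this]; exact Set.finite_range _
  have hclosed : IsClosed (permutohedron w) := hfin.isClosed_convexHull ℝ
  have hconv : Convex ℝ (permutohedron w) := convex_convexHull ℝ _
  obtain ⟨f, u, hfu, hux⟩ := geometric_hahn_banach_closed_point hconv hclosed hxn
  set c : Fin d → ℝ := fun i => f (fun j => if i = j then (1:ℝ) else 0) with hc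
  have hf : ∀ y : Fin d → ℝ, f y = ∑ i, y i * c i := by
    intro y
    conv_lhs => rw [pi_eq_sum_univ y]
    rw [map_sum]
    exact Finset.sum_congr rfl fun i _ => by rw [map_smul]; simp [hc, smul_eq_mul]
  set σc := Tuple.sort (fun j => -c j) with hσc
  set σx := Tuple.sort (fun j => -x j) with hσx
  set σw := Tuple.sort (fun j => -w j) with hσw
  have ha : Antitone (sortDesc c) := sortDesc_antitone c
  set ρ : Equiv.Perm (Fin d) := σx⁻¹ * σc with hρ
  have h1 : f x = ∑ i, sortDesc c i * sortDesc x (ρ i) := by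
    rw [hf, ← Equiv.sum_comp σc (fun i => x i * c i)]
    refine Finset.sum_congr rfl fun i _ => ?_
    have hxi : sortDesc x (ρ i) = x (σc i) := by
      simp [sortDesc, hρ, ← hσx, Equiv.Perm.mul_apply]
    have hci : sortDesc c i = c (σc i) := rfl
    rw [hxi, hci, mul_comm]
  have hmono : Monovary (sortDesc c) (sortDesc x) := by
    intro i j hij
    have hji : j < i := by
      by_contra hcon
      push_neg at hcon
      exact absurd (sortDesc_antitone x hcon) (not_le.mpr hij)
    exact ha hji.le
  have h2 : ∑ i, sortDesc c i * sortDesc x (ρ i) ≤ ∑ i, sortDesc c i * sortDesc x i :=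
    hmono.sum_mul_comp_perm_le_sum_mul
  set A : ℕ → ℝ := fun k => if h : k < d then sortDesc c ⟨k, h⟩ else 0 with hA
  have hsum_a : ∀ y : Fin d → ℝ,
      ∑ i, sortDesc c i * sortDesc y i
        = ∑ k ∈ Finset.range d, A k * (psum y (k+1) - psum y k) := by
    intro y
    rw [← Fin.sum_univ_eq_sum_range (fun k => A k * (psum y (k+1) - psum y k)) d]
    refine Finset.sum_congr rfl fun i _ => ?_
    have hA1 : A (i : ℕ) = sortDesc c i := by simp [hA, i.isLt]
    have hA2 : psum y ((i : ℕ)+1) = psum y (i : ℕ) + sortDesc y i := by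
      have := psum_succ i.isLt y
      simpa using this
    rw [hA1, hA2]; ring
  have h3 : ∑ i, sortDesc c i * sortDesc x i ≤ ∑ i, sortDesc c i * sortDesc w i := by
    rw [hsum_a x, hsum_a w]
    have habel := abel_aux A (fun k => psum x k - psum w k) d
      (fun m n hmn hnd => by
        simp only [hA, dif_pos hnd, dif_pos (lt_of_le_of_lt hmn hnd)]
        exact ha (by simpa [Fin.le_def] using hmn))
      (fun k hk => by simpa using sub_nonpos.mpr (hx.1 k hk))
      (by simp [psum_zero])
      (by simp [psum_top, hx.2])
    have hdiff : ∑ k ∈ Finset.range d, A k * (psum x (k+1) - psum x k)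
        - ∑ k ∈ Finset.range d, A k * (psum w (k+1) - psum w k)
        = ∑ k ∈ Finset.range d,
            A k * ((psum x (k+1) - psum w (k+1)) - (psum x k - psum w k)) := by
      rw [← Finset.sum_sub_distrib]
      exact Finset.sum_congr rfl fun k _ => by ring
    linarith [hdiff ▸ habel]
  set τ : Equiv.Perm (Fin d) := σw * σc⁻¹ with hτ
  have h4 : ∑ i, sortDesc c i * sortDesc w i = f (w ∘ τ) := by
    rw [hf, ← Equiv.sum_comp σc (fun i => (w ∘ τ) i * c i)]
    refine Finset.sum_congr rfl fun i _ => ?_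
    have hwi : (w ∘ τ) (σc i) = sortDesc w i := by
      simp [sortDesc, hτ, ← hσw, Equiv.Perm.mul_apply]
    rw [hwi, mul_comm]
    rfl
  have hmem : w ∘ τ ∈ permutohedron w :=
    subset_convexHull ℝ _ ⟨τ, rfl⟩
  have hlt := hfu _ hmem
  have hle : f x ≤ f (w ∘ τ) := by
    rw [h1, ← h4]
    exact le_trans h2 h3
  linarith

theorem rado {d : ℕ} (w : Fin d → ℝ) :
    permutohedron w = {x | Majorizes x w} :=
  Set.Subset.antisymm (rado_subset w) (fun x hx => rado_superset w x hx)

lemma rawPsum_top {d : ℕ} (u : Fin d → ℝ) : rawPsum u d = ∑ i, u i := by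
  unfold rawPsum
  congr 1
  ext i; simp [i.isLt]


/-- The intersection of permutohedra of decreasingly ordered vectors with equal total
sums equals the permutohedron of the minimal vector `v⁻`, which is defined by the
pointwise minima of the partial sums (assumed to define a decreasingly ordered
vector). -/
theorem permutohedron_inter_eq_min {d R : ℕ} (hR : 0 < R)
    (v : Fin R → (Fin d → ℝ)) (hv : ∀ j, Antitone (v j))
    (hsum : ∀ j j', ∑ i, v j i = ∑ i, v j' i)
    (vm : Fin d → ℝ) (hvm : Antitone vm)
    (hvmPsum : ∀ k : ℕ, k ≤ d → rawPsum vm k = ⨅ j : Fin R, rawPsum (v j) k) :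
    permutohedron vm = ⋂ j : Fin R, permutohedron (v j) := by
  have hFR : Nonempty (Fin R) := ⟨⟨0, hR⟩⟩
  have hpsum_raw : ∀ (u : Fin d → ℝ), Antitone u → ∀ k, psum u k = rawPsum u k := by
    intro u hu k
    unfold psum rawPsum
    rw [sortDesc_eq_self hu]
  have hbdd : ∀ k, BddBelow (Set.range fun j : Fin R => rawPsum (v j) k) :=
    fun k => (Set.finite_range _).bddBelow
  have hsum_vm : ∀ j, ∑ i, vm i = ∑ i, v j i := by
    intro j
    have h2 : (⨅ j' : Fin R, rawPsum (v j') d) = rawPsum (v j) d := by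
      apply le_antisymm (ciInf_le (hbdd d) j)
      apply le_ciInf
      intro j'
      rw [rawPsum_top, rawPsum_top, hsum j j']
    rw [← rawPsum_top, ← rawPsum_top, hvmPsum d le_rfl, h2]
  have hmaj_vm : ∀ j, Majorizes vm (v j) := by
    intro j
    refine ⟨fun k hk => ?_, hsum_vm j⟩
    rw [hpsum_raw vm hvm, hpsum_raw _ (hv j), hvmPsum k hk]
    exact ciInf_le (hbdd k) j
  ext x
  simp only [rado, Set.mem_iInter, Set.mem_setOf_eq]
  constructor
  · intro hx j
    exact ⟨fun k hk => (hx.1 k hk).trans ((hmaj_vm j).1 k hk), hx.2.trans (hmaj_vm j).2⟩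
  · intro hx
    constructor
    · intro k hk
      rw [hpsum_raw vm hvm, hvmPsum k hk]
      apply le_ciInf
      intro j
      rw [← hpsum_raw _ (hv j)]
      exact (hx j).1 k hk
    · exact (hx ⟨0, hR⟩).2.trans (hsum_vm ⟨0, hR⟩).symm
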